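/- The function H(x,y) = (1+x)^(−1)·(1+y)^(−1)·(x⁴ + y⁴) is a first integral, on {x > −1, y > −1}, of the system ẋ = −a(1+x)(x⁴ − 4y³ − 3y⁴), ẏ = −a(1+y)(4x³ + 3x⁴ − y⁴), for every real a. -/

import Mathlib

lemma rpow_neg_one' (t : ℝ) : t ^ (-1 : ℝ) = t⁻¹ := by
  rw [show (-1 : ℝ) = ((-1 : ℤ) : ℝ) by norm_num, Real.rpow_intCast, zpow_neg_one]

lemma deriv_aux (c u : ℝ) (x : ℝ) (hx : (1 : ℝ) + x ≠ 0) :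
    deriv (fun x : ℝ => (1+x)⁻¹ * c * (x^4 + u)) x
      = -(1+x)⁻¹^2 * c * (x^4 + u) + (1+x)⁻¹ * c * (4*x^3) := by
  have h1 : HasDerivAt (fun x : ℝ => (1+x)⁻¹) (-1/(1+x)^2) x := by
    have := ((hasDerivAt_id x).const_add 1).fun_inv hx
    simpa using this
  have h2 : HasDerivAt (fun x : ℝ => x^4 + u) (4*x^3) x := by
    simpa using ((hasDerivAt_pow 4 x).add_const u)
  have := ((h1.mul_const c).fun_mul h2).deriv
  rw [this]
  field_simp

theorem degenerate_center_first_integral (a : ℝ) :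
    ∀ x y : ℝ, x > -1 → y > -1 →
      (-a*(1+x)*(x^4 - 4*y^3 - 3*y^4)) *
        deriv (fun x : ℝ => (1+x) ^ (-1 : ℝ) * (1+y) ^ (-1 : ℝ) * (x^4 + y^4)) x +
      (-a*(1+y)*(4*x^3 + 3*x^4 - y^4)) *
        deriv (fun y : ℝ => (1+x) ^ (-1 : ℝ) * (1+y) ^ (-1 : ℝ) * (x^4 + y^4)) y = 0 := by
  intro x y hx hy
  have hx' : (1:ℝ) + x ≠ 0 := by linarith
  have hy' : (1:ℝ) + y ≠ 0 := by linarith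
  have e1 : deriv (fun x : ℝ => (1+x) ^ (-1 : ℝ) * (1+y) ^ (-1 : ℝ) * (x^4 + y^4)) x
      = -(1+x)⁻¹^2 * (1+y)⁻¹ * (x^4 + y^4) + (1+x)⁻¹ * (1+y)⁻¹ * (4*x^3) := by
    simp only [rpow_neg_one']
    exact deriv_aux _ _ x hx'
  have e2 : deriv (fun y : ℝ => (1+x) ^ (-1 : ℝ) * (1+y) ^ (-1 : ℝ) * (x^4 + y^4)) y
      = -(1+y)⁻¹^2 * (1+x)⁻¹ * (y^4 + x^4) + (1+y)⁻¹ * (1+x)⁻¹ * (4*y^3) := by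
    simp only [rpow_neg_one']
    have : (fun y : ℝ => (1+x)⁻¹ * (1+y)⁻¹ * (x^4 + y^4))
        = (fun y : ℝ => (1+y)⁻¹ * (1+x)⁻¹ * (y^4 + x^4)) := by
      funext t; ring
    rw [this]
    exact deriv_aux _ _ y hy'
  rw [e1, e2]
  field_simp
  ring
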